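/- Let 𝒯 be a graded Lyubeznik functor on the category *Mod(R) of graded R-modules. Then 𝒯(R) is a generalized Eulerian A_n(K)-module. -/

import Mathlib

/-! ### The Weyl algebra `A_n(K)` as a quotient of the free algebra. -/

/-- The defining relations of the `n`-th Weyl algebra: the `X_i` commute, the `∂_i` commute,
and `∂_i X_j = X_j ∂_i + δ_{ij}`. -/
inductive WeylRel (K : Type) [Field K] (n : ℕ) :
    FreeAlgebra K (Fin n ⊕ Fin n) → FreeAlgebra K (Fin n ⊕ Fin n) → Prop
  | xx (i j : Fin n) : WeylRel K n
      (FreeAlgebra.ι K (Sum.inl i) * FreeAlgebra.ι K (Sum.inl j))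
      (FreeAlgebra.ι K (Sum.inl j) * FreeAlgebra.ι K (Sum.inl i))
  | dd (i j : Fin n) : WeylRel K n
      (FreeAlgebra.ι K (Sum.inr i) * FreeAlgebra.ι K (Sum.inr j))
      (FreeAlgebra.ι K (Sum.inr j) * FreeAlgebra.ι K (Sum.inr i))
  | dx (i j : Fin n) : WeylRel K n
      (FreeAlgebra.ι K (Sum.inr i) * FreeAlgebra.ι K (Sum.inl j))
      (FreeAlgebra.ι K (Sum.inl j) * FreeAlgebra.ι K (Sum.inr i) + if i = j then 1 else 0)

/-- The `n`-th Weyl algebra over `K`. -/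
abbrev WeylAlgebra (K : Type) [Field K] (n : ℕ) : Type := RingQuot (WeylRel K n)

/-- The variable `X_i` (degree `+1`) in the Weyl algebra. -/
noncomputable def Wx (K : Type) [Field K] {n : ℕ} (i : Fin n) : WeylAlgebra K n :=
  RingQuot.mkAlgHom K (WeylRel K n) (FreeAlgebra.ι K (Sum.inl i))

/-- The partial derivative `∂_i` (degree `-1`) in the Weyl algebra. -/
noncomputable def Wd (K : Type) [Field K] {n : ℕ} (i : Fin n) : WeylAlgebra K n :=
  RingQuot.mkAlgHom K (WeylRel K n) (FreeAlgebra.ι K (Sum.inr i))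

/-- The Euler operator `ℰ_n = ∑ X_i ∂_i`. -/
noncomputable def weylEuler (K : Type) [Field K] (n : ℕ) : WeylAlgebra K n :=
  ∑ i : Fin n, Wx K i * Wd K i

/-- The Euler operator `ℰ_r = ∑_{i < r} X_i ∂_i` of the subalgebra `A_r(K) ⊆ A_n(K)`. -/
noncomputable def weylEulerUpTo (K : Type) [Field K] (n r : ℕ) : WeylAlgebra K n :=
  ∑ i ∈ Finset.univ.filter (fun i : Fin n => (i : ℕ) < r), Wx K i * Wd K i

/-- Monomials of degree `d` in the variables `X_1, …, X_n` inside the Weyl algebra. -/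
def xMonomials (K : Type) [Field K] (n d : ℕ) : Set (WeylAlgebra K n) :=
  {w | ∃ l : List (Fin n), l.length = d ∧ w = (l.map (Wx K)).prod}

/-- `f` is a homogeneous polynomial of degree `d` in `R = K[X_1, …, X_n] ⊆ A_n(K)`. -/
def IsHomogPoly (K : Type) [Field K] {n : ℕ} (f : WeylAlgebra K n) (d : ℕ) : Prop :=
  f ∈ Submodule.span K (xMonomials K n d)

/-! ### Graded (left) modules over the Weyl algebra. -/

/-- A graded left `A_n(K)`-module: a module over the Weyl algebra together with an internal
`ℤ`-grading, stable under `K` and such that `X_i` raises degree by one and `∂_i` lowers it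
by one. -/
structure GWM (K : Type) [Field K] (n : ℕ) where
  carrier : Type
  [acg : AddCommGroup carrier]
  [mod : Module (WeylAlgebra K n) carrier]
  deg : ℤ → AddSubgroup carrier
  isInternal : DirectSum.IsInternal deg
  k_smul : ∀ (c : K) (j : ℤ) (m : carrier), m ∈ deg j →
    algebraMap K (WeylAlgebra K n) c • m ∈ deg j
  x_smul : ∀ (i : Fin n) (j : ℤ) (m : carrier), m ∈ deg j → Wx K i • m ∈ deg (j + 1)
  d_smul : ∀ (i : Fin n) (j : ℤ) (m : carrier), m ∈ deg j → Wd K i • m ∈ deg (j - 1)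

attribute [instance] GWM.acg GWM.mod

instance {K : Type} [Field K] {n : ℕ} : CoeSort (GWM K n) Type := ⟨GWM.carrier⟩

/-- A graded `A_n(K)`-module is *generalized Eulerian* if every homogeneous element `z`
is killed by some power of `ℰ_n - |z|`. -/
def GWM.IsGenEulerian {K : Type} [Field K] {n : ℕ} (M : GWM K n) : Prop :=
  ∀ (j : ℤ) (m : M.carrier), m ∈ M.deg j →
    ∃ a : ℕ, 1 ≤ a ∧ ((weylEuler K n - (j : WeylAlgebra K n)) ^ a) • m = 0

/-- A graded module is concentrated in degree `d` if all other graded pieces vanish. -/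
def GWM.ConcentratedIn {K : Type} [Field K] {n : ℕ} (M : GWM K n) (d : ℤ) : Prop :=
  ∀ j : ℤ, j ≠ d → M.deg j = ⊥

/-! ### Koszul (co)homology of a graded module with respect to commuting operators.

The Koszul complex of operators `u : Fin c → A_n(K)` on `M` has, in homological level `i`,
the module of functions from `i`-element subsets of `Fin c` to `M`.  Cohomology `H^ν` is
homology in level `c - ν`. -/

/-- Level `i` of the Koszul complex on `c` operators with values in `M`. -/
abbrev KosLevel {K : Type} [Field K] {n : ℕ} (M : GWM K n) (c : ℕ) (i : ℤ) : Type :=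
  {S : Finset (Fin c) // (S.card : ℤ) = i} → M.carrier

/-- The Koszul differential (from level `a` to level `b`; it is the genuine differential
when `b = a - 1`): `(dψ)(T) = ∑_{k ∉ T} (-1)^{|{x ∈ T | x < k}|} u_k • ψ(T ∪ {k})`. -/
noncomputable def kosDiff {K : Type} [Field K] {n : ℕ} {M : GWM K n} {c : ℕ}
    (u : Fin c → WeylAlgebra K n) (a b : ℤ) (ψ : KosLevel M c a)
    (T : {S : Finset (Fin c) // (S.card : ℤ) = b}) : M.carrier :=
  ∑ k ∈ (T.1)ᶜ, ((-1 : ℤ) ^ ((T.1.filter (fun x => x < k)).card)) •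
    (u k • (if h : (((insert k T.1).card : ℤ)) = a then ψ ⟨insert k T.1, h⟩ else 0))

/-- A Koszul `i`-chain is a cycle if the differential to level `i - 1` kills it. -/
def kosIsCycle {K : Type} [Field K] {n : ℕ} {M : GWM K n} {c : ℕ}
    (u : Fin c → WeylAlgebra K n) (i : ℤ) (φ : KosLevel M c i) : Prop :=
  ∀ T, kosDiff u i (i - 1) φ T = 0

/-- A Koszul `i`-chain is a boundary if it is the image of an `(i+1)`-chain. -/
def kosIsBoundary {K : Type} [Field K] {n : ℕ} {M : GWM K n} {c : ℕ}
    (u : Fin c → WeylAlgebra K n) (i : ℤ) (φ : KosLevel M c i) : Prop :=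
  ∃ ψ : KosLevel M c (i + 1), (fun T => kosDiff u (i + 1) i ψ T) = φ

/-- A Koszul `i`-chain is homogeneous of (internal) degree `j`: on a subset `S` its value
lies in degree `j - ∑_{k ∈ S} deg u_k`, where `du k` is the degree of the operator `u k`. -/
def kosHomog {K : Type} [Field K] {n : ℕ} {M : GWM K n} {c : ℕ}
    (du : Fin c → ℤ) (i j : ℤ) (φ : KosLevel M c i) : Prop :=
  ∀ S : {S : Finset (Fin c) // (S.card : ℤ) = i}, φ S ∈ M.deg (j - ∑ k ∈ S.1, du k)

/-! ### Čech complexes.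

Local cohomology `H^i_I(M)` for a homogeneous ideal `I = (f_1, …, f_s)` is the `i`-th
cohomology of the Čech complex `0 → M → ⊕ M_{f_k} → ⋯`.  We encode the Čech complex by
abstract data: a family of graded `A_n(K)`-modules `L S` (for `S ⊆ {1,…,s}`), each of which
is the localization of `M` at `∏_{k ∈ S} f_k` (characterized by the usual universal
properties: the element acts bijectively, every element is a fraction, and the kernel of the
localization map is the torsion). -/

/-- The product `f_S = ∏_{k ∈ S} f_k` (as an ordered list product). -/
noncomputable def cechProd {K : Type} [Field K] {n : ℕ} {s : ℕ}
    (f : Fin s → WeylAlgebra K n) (S : Finset (Fin s)) : WeylAlgebra K n :=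
  ((S.sort (· ≤ ·)).map f).prod

/-- Data presenting the Čech complex of a graded `A_n(K)`-module `M` with respect to the
elements `f : Fin s → A_n(K)`. -/
structure CechData (K : Type) [Field K] (n : ℕ) (M : GWM K n) (s : ℕ)
    (f : Fin s → WeylAlgebra K n) where
  /-- `L S` is the localization `M_{f_S}`, `f_S = ∏_{k ∈ S} f_k`. -/
  L : Finset (Fin s) → GWM K n
  /-- localization maps `M_{f_S} → M_{f_T}` for `S ⊆ T`. -/
  ρ : ∀ {S T : Finset (Fin s)}, S ⊆ T → (L S).carrier → (L T).carrier
  ρ_add : ∀ {S T : Finset (Fin s)} (h : S ⊆ T) (x y : (L S).carrier),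
    ρ h (x + y) = ρ h x + ρ h y
  ρ_smul : ∀ {S T : Finset (Fin s)} (h : S ⊆ T) (w : WeylAlgebra K n) (x : (L S).carrier),
    ρ h (w • x) = w • ρ h x
  ρ_deg : ∀ {S T : Finset (Fin s)} (h : S ⊆ T) (j : ℤ) (x : (L S).carrier),
    x ∈ (L S).deg j → ρ h x ∈ (L T).deg j
  ρ_id : ∀ (S : Finset (Fin s)) (x : (L S).carrier), ρ (le_refl S) x = x
  ρ_comp : ∀ {S T U : Finset (Fin s)} (h1 : S ⊆ T) (h2 : T ⊆ U) (x : (L S).carrier),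
    ρ h2 (ρ h1 x) = ρ (h1.trans h2) x
  /-- the identification of `M` with the empty localization. -/
  η : M.carrier → (L ∅).carrier
  η_add : ∀ x y, η (x + y) = η x + η y
  η_smul : ∀ (w : WeylAlgebra K n) (x : M.carrier), η (w • x) = w • η x
  η_deg : ∀ (j : ℤ) (x : M.carrier), x ∈ M.deg j → η x ∈ (L ∅).deg j
  η_bij : Function.Bijective η
  loc_bij : ∀ S : Finset (Fin s),
    Function.Bijective (fun z : (L S).carrier => (cechProd f S) • z)
  loc_surj : ∀ (S : Finset (Fin s)) (z : (L S).carrier),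
    ∃ (m : M.carrier) (k : ℕ), ((cechProd f S) ^ k) • z = ρ (Finset.empty_subset S) (η m)
  loc_ker : ∀ (S : Finset (Fin s)) (m : M.carrier),
    ρ (Finset.empty_subset S) (η m) = 0 ↔ ∃ k : ℕ, ((cechProd f S) ^ k) • m = 0

/-- Level `i` of the Čech complex. -/
abbrev CechLevel {K : Type} [Field K] {n : ℕ} {M : GWM K n} {s : ℕ}
    {f : Fin s → WeylAlgebra K n} (D : CechData K n M s f) (i : ℤ) : Type :=
  ∀ S : {S : Finset (Fin s) // (S.card : ℤ) = i}, (D.L S.1).carrier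

/-- The Čech differential (from level `a` to level `b`; it is the genuine coboundary when
`b = a + 1`): `(dψ)(T) = ∑_{k ∈ T} (-1)^{|{x ∈ T | x < k}|} ρ(ψ(T \ {k}))`. -/
noncomputable def cechDiff {K : Type} [Field K] {n : ℕ} {M : GWM K n} {s : ℕ}
    {f : Fin s → WeylAlgebra K n} (D : CechData K n M s f) (a b : ℤ) (ψ : CechLevel D a)
    (T : {S : Finset (Fin s) // (S.card : ℤ) = b}) : (D.L T.1).carrier :=
  ∑ k ∈ T.1.attach, ((-1 : ℤ) ^ ((T.1.filter (fun x => x < k.1)).card)) •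
    (if h : (((T.1.erase k.1).card : ℤ)) = a then
      D.ρ (Finset.erase_subset k.1 T.1) (ψ ⟨T.1.erase k.1, h⟩) else 0)

def cechIsCycle {K : Type} [Field K] {n : ℕ} {M : GWM K n} {s : ℕ}
    {f : Fin s → WeylAlgebra K n} (D : CechData K n M s f) (i : ℤ)
    (φ : CechLevel D i) : Prop :=
  ∀ T, cechDiff D i (i + 1) φ T = 0

def cechIsBoundary {K : Type} [Field K] {n : ℕ} {M : GWM K n} {s : ℕ}
    {f : Fin s → WeylAlgebra K n} (D : CechData K n M s f) (i : ℤ)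
    (φ : CechLevel D i) : Prop :=
  ∃ ψ : CechLevel D (i - 1), (fun T => cechDiff D (i - 1) i ψ T) = φ

def cechHomog {K : Type} [Field K] {n : ℕ} {M : GWM K n} {s : ℕ}
    {f : Fin s → WeylAlgebra K n} (D : CechData K n M s f) (i j : ℤ)
    (φ : CechLevel D i) : Prop :=
  ∀ S : {S : Finset (Fin s) // (S.card : ℤ) = i}, φ S ∈ (D.L S.1).deg j

/-- `W` realizes the `i`-th cohomology of the Čech complex `D`, i.e. `W ≅ H^i_{(f)}(M)`
as graded `A_n(K)`-modules. -/
def IsCechCohomologyOf {K : Type} [Field K] {n : ℕ} {M : GWM K n} {s : ℕ}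
    {f : Fin s → WeylAlgebra K n} (D : CechData K n M s f) (i : ℤ) (W : GWM K n) : Prop :=
  ∃ π : CechLevel D i → W.carrier,
    (∀ x y, π (x + y) = π x + π y) ∧
    (∀ (w : WeylAlgebra K n) x, π (w • x) = w • π x) ∧
    (∀ x, cechIsCycle D i x → (π x = 0 ↔ cechIsBoundary D i x)) ∧
    (∀ (j : ℤ) x, cechIsCycle D i x → cechHomog D i j x → π x ∈ W.deg j) ∧
    (∀ (j : ℤ) (w : W.carrier), w ∈ W.deg j →
      ∃ x, cechIsCycle D i x ∧ cechHomog D i j x ∧ π x = w)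

/-! ### Graded Lyubeznik functors.

A homogeneous locally closed subset `Y = Y'' - Y'` of `Spec R` is presented by a list of
homogeneous polynomials `f : Fin s → R`, of which the first `sL` generate the ideal of
`Y''` and all of them generate the ideal of `Y'` (any pair of homogeneous closed sets
`Y' ⊆ Y''` arises this way).  Then `RΓ_{Y'}` is the full Čech complex, `RΓ_{Y''}` the Čech
complex on the first `sL` elements, and `RΓ_Y` is the mapping cone of the natural chain map
`RΓ_{Y'} → RΓ_{Y''}`, so that the exact sequence
`H^i_{Y'} → H^i_{Y''} → H^i_Y → H^{i+1}_{Y'}` holds.  A graded Lyubeznik functor value is a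
finite composition of the functors `H^i_Y(-)` and kernels of the three arrows above. -/

section Lyubeznik

variable {K : Type} [Field K] {n : ℕ} {M : GWM K n} {s : ℕ} {f : Fin s → WeylAlgebra K n}

/-- Level `i` of the Čech subcomplex on the first `sL` elements of the list. -/
abbrev CechLevelLeft (D : CechData K n M s f) (sL : ℕ) (i : ℤ) : Type :=
  ∀ S : {S : Finset (Fin s) // (S.card : ℤ) = i ∧ ∀ x ∈ S, (x : ℕ) < sL},
    (D.L S.1).carrier

/-- The Čech differential of the subcomplex. -/
noncomputable def cechDiffLeft (D : CechData K n M s f) (sL : ℕ) (a b : ℤ)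
    (ψ : CechLevelLeft D sL a)
    (T : {S : Finset (Fin s) // (S.card : ℤ) = b ∧ ∀ x ∈ S, (x : ℕ) < sL}) :
    (D.L T.1).carrier :=
  ∑ k ∈ T.1.attach, ((-1 : ℤ) ^ ((T.1.filter (fun x => x < k.1)).card)) •
    (if h : (((T.1.erase k.1).card : ℤ)) = a ∧ ∀ x ∈ T.1.erase k.1, (x : ℕ) < sL then
      D.ρ (Finset.erase_subset k.1 T.1) (ψ ⟨T.1.erase k.1, h⟩) else 0)

def cechLeftIsCycle (D : CechData K n M s f) (sL : ℕ) (i : ℤ)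
    (φ : CechLevelLeft D sL i) : Prop :=
  ∀ T, cechDiffLeft D sL i (i + 1) φ T = 0

def cechLeftIsBoundary (D : CechData K n M s f) (sL : ℕ) (i : ℤ)
    (φ : CechLevelLeft D sL i) : Prop :=
  ∃ ψ : CechLevelLeft D sL (i - 1), (fun T => cechDiffLeft D sL (i - 1) i ψ T) = φ

def cechLeftHomog (D : CechData K n M s f) (sL : ℕ) (i j : ℤ)
    (φ : CechLevelLeft D sL i) : Prop :=
  ∀ S, φ S ∈ (D.L S.1).deg j

/-- The restriction chain map from the full Čech complex (computing `RΓ_{Y'}`) to the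
subcomplex (computing `RΓ_{Y''}`). -/
def cechRestr (D : CechData K n M s f) (sL : ℕ) (i : ℤ) (φ : CechLevel D i) :
    CechLevelLeft D sL i :=
  fun T => φ ⟨T.1, T.2.1⟩

/-- Level `i` of the mapping cone of `cechRestr`, computing `RΓ_Y` for the locally closed
set `Y = Y'' - Y'`. -/
abbrev ConeLevel (D : CechData K n M s f) (sL : ℕ) (i : ℤ) : Type :=
  CechLevel D (i + 1) × CechLevelLeft D sL i

/-- The differential of the mapping cone (the genuine one for `b = a + 1`). -/
noncomputable def coneDiff (D : CechData K n M s f) (sL : ℕ) (a b : ℤ)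
    (z : ConeLevel D sL a) : ConeLevel D sL b :=
  ( fun T => - cechDiff D (a + 1) (b + 1) z.1 T,
    fun T => (if h : ((T.1.card : ℤ)) = a + 1 then z.1 ⟨T.1, h⟩ else 0) +
      cechDiffLeft D sL a b z.2 T )

def coneIsCycle (D : CechData K n M s f) (sL : ℕ) (i : ℤ) (z : ConeLevel D sL i) : Prop :=
  coneDiff D sL i (i + 1) z = 0

def coneIsBoundary (D : CechData K n M s f) (sL : ℕ) (i : ℤ)
    (z : ConeLevel D sL i) : Prop :=
  ∃ w : ConeLevel D sL (i - 1), coneDiff D sL (i - 1) i w = z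

def coneHomog (D : CechData K n M s f) (sL : ℕ) (i j : ℤ) (z : ConeLevel D sL i) : Prop :=
  (∀ S, z.1 S ∈ (D.L S.1).deg j) ∧ (∀ S, z.2 S ∈ (D.L S.1).deg j)

/-- `W` realizes `H^i_Y(M)` for the homogeneous locally closed set `Y` presented by the
Čech–cone data. -/
def IsConeCohomologyOf (D : CechData K n M s f) (sL : ℕ) (i : ℤ) (W : GWM K n) : Prop :=
  ∃ π : ConeLevel D sL i → W.carrier,
    (∀ x y, π (x + y) = π x + π y) ∧
    (∀ (w : WeylAlgebra K n) x, π (w • x) = w • π x) ∧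
    (∀ z, coneIsCycle D sL i z → (π z = 0 ↔ coneIsBoundary D sL i z)) ∧
    (∀ (j : ℤ) z, coneIsCycle D sL i z → coneHomog D sL i j z → π z ∈ W.deg j) ∧
    (∀ (j : ℤ) (w : W.carrier), w ∈ W.deg j →
      ∃ z, coneIsCycle D sL i z ∧ coneHomog D sL i j z ∧ π z = w)

/-- `W` realizes the kernel of the arrow `H^i_{Y'}(M) → H^i_{Y''}(M)`. -/
def IsKerArrow1Of (D : CechData K n M s f) (sL : ℕ) (i : ℤ) (W : GWM K n) : Prop :=
  ∃ π : CechLevel D i → W.carrier,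
    (∀ x y, π (x + y) = π x + π y) ∧
    (∀ (w : WeylAlgebra K n) x, π (w • x) = w • π x) ∧
    (∀ x, cechIsCycle D i x → cechLeftIsBoundary D sL i (cechRestr D sL i x) →
      (π x = 0 ↔ cechIsBoundary D i x)) ∧
    (∀ (j : ℤ) x, cechIsCycle D i x → cechLeftIsBoundary D sL i (cechRestr D sL i x) →
      cechHomog D i j x → π x ∈ W.deg j) ∧
    (∀ (j : ℤ) (w : W.carrier), w ∈ W.deg j →
      ∃ x, cechIsCycle D i x ∧ cechLeftIsBoundary D sL i (cechRestr D sL i x) ∧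
        cechHomog D i j x ∧ π x = w)

/-- `W` realizes the kernel of the arrow `H^i_{Y''}(M) → H^i_Y(M)`. -/
def IsKerArrow2Of (D : CechData K n M s f) (sL : ℕ) (i : ℤ) (W : GWM K n) : Prop :=
  ∃ π : CechLevelLeft D sL i → W.carrier,
    (∀ x y, π (x + y) = π x + π y) ∧
    (∀ (w : WeylAlgebra K n) x, π (w • x) = w • π x) ∧
    (∀ x, cechLeftIsCycle D sL i x → coneIsBoundary D sL i (0, x) →
      (π x = 0 ↔ cechLeftIsBoundary D sL i x)) ∧
    (∀ (j : ℤ) x, cechLeftIsCycle D sL i x → coneIsBoundary D sL i (0, x) →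
      cechLeftHomog D sL i j x → π x ∈ W.deg j) ∧
    (∀ (j : ℤ) (w : W.carrier), w ∈ W.deg j →
      ∃ x, cechLeftIsCycle D sL i x ∧ coneIsBoundary D sL i (0, x) ∧
        cechLeftHomog D sL i j x ∧ π x = w)

/-- `W` realizes the kernel of the arrow `H^i_Y(M) → H^{i+1}_{Y'}(M)`. -/
def IsKerArrow3Of (D : CechData K n M s f) (sL : ℕ) (i : ℤ) (W : GWM K n) : Prop :=
  ∃ π : ConeLevel D sL i → W.carrier,
    (∀ x y, π (x + y) = π x + π y) ∧
    (∀ (w : WeylAlgebra K n) x, π (w • x) = w • π x) ∧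
    (∀ z, coneIsCycle D sL i z → cechIsBoundary D (i + 1) z.1 →
      (π z = 0 ↔ coneIsBoundary D sL i z)) ∧
    (∀ (j : ℤ) z, coneIsCycle D sL i z → cechIsBoundary D (i + 1) z.1 →
      coneHomog D sL i j z → π z ∈ W.deg j) ∧
    (∀ (j : ℤ) (w : W.carrier), w ∈ W.deg j →
      ∃ z, coneIsCycle D sL i z ∧ cechIsBoundary D (i + 1) z.1 ∧
        coneHomog D sL i j z ∧ π z = w)

end Lyubeznik

/-- One step of a graded Lyubeznik functor: `W` is obtained from `V` either as
`H^i_Y(V)` for a homogeneous locally closed `Y ⊆ Spec R`, or as the kernel of one of the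
three arrows in the exact sequence `H^i_{Y'} → H^i_{Y''} → H^i_Y → H^{i+1}_{Y'}`. -/
inductive LyubeznikStep (K : Type) [Field K] (n : ℕ) : GWM K n → GWM K n → Prop
  | cone (V W : GWM K n) (s sL : ℕ) (f : Fin s → WeylAlgebra K n) (df : Fin s → ℕ)
      (hf : ∀ k, IsHomogPoly K (f k) (df k)) (D : CechData K n V s f) (i : ℤ)
      (h : IsConeCohomologyOf D sL i W) : LyubeznikStep K n V W
  | ker1 (V W : GWM K n) (s sL : ℕ) (f : Fin s → WeylAlgebra K n) (df : Fin s → ℕ)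
      (hf : ∀ k, IsHomogPoly K (f k) (df k)) (D : CechData K n V s f) (i : ℤ)
      (h : IsKerArrow1Of D sL i W) : LyubeznikStep K n V W
  | ker2 (V W : GWM K n) (s sL : ℕ) (f : Fin s → WeylAlgebra K n) (df : Fin s → ℕ)
      (hf : ∀ k, IsHomogPoly K (f k) (df k)) (D : CechData K n V s f) (i : ℤ)
      (h : IsKerArrow2Of D sL i W) : LyubeznikStep K n V W
  | ker3 (V W : GWM K n) (s sL : ℕ) (f : Fin s → WeylAlgebra K n) (df : Fin s → ℕ)
      (hf : ∀ k, IsHomogPoly K (f k) (df k)) (D : CechData K n V s f) (i : ℤ)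
      (h : IsKerArrow3Of D sL i W) : LyubeznikStep K n V W

/-- `W = 𝒯(V)` for some graded Lyubeznik functor `𝒯` (a finite composition of the
basic steps). -/
def IsLyubeznikValue (K : Type) [Field K] (n : ℕ) (V W : GWM K n) : Prop :=
  Relation.ReflTransGen (LyubeznikStep K n) V W

/-- `R = K[X_1, …, X_n]`, as the graded left `A_n(K)`-module `A_n(K)/A_n(K)·(∂_1, …, ∂_n)`:
it is generated by a degree-zero element `e` killed by all `∂_i`, whose annihilator is
exactly the left ideal generated by the `∂_i`. -/
def IsPolynomialGWM (K : Type) [Field K] {n : ℕ} (R0 : GWM K n) : Prop :=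
  ∃ e : R0.carrier, e ∈ R0.deg 0 ∧ (∀ i : Fin n, Wd K i • e = 0) ∧
    Submodule.span (WeylAlgebra K n) {e} = ⊤ ∧
    ∀ w : WeylAlgebra K n, w • e = 0 →
      w ∈ Submodule.span (WeylAlgebra K n) (Set.range fun i : Fin n => Wd K i)



section Aux
variable {K : Type} [Field K] {n : ℕ}

lemma wx_wx (i j : Fin n) : Wx K i * Wx K j = Wx K j * Wx K i := by
  unfold Wx; rw [← map_mul, RingQuot.mkAlgHom_rel K (WeylRel.xx i j), map_mul]

lemma wd_wd (i j : Fin n) : Wd K i * Wd K j = Wd K j * Wd K i := by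
  unfold Wd; rw [← map_mul, RingQuot.mkAlgHom_rel K (WeylRel.dd i j), map_mul]

lemma wd_wx (i j : Fin n) : Wd K i * Wx K j = Wx K j * Wd K i + if i = j then 1 else 0 := by
  unfold Wd Wx
  rw [← map_mul, RingQuot.mkAlgHom_rel K (WeylRel.dx i j), map_add, map_mul]
  congr 1
  split_ifs <;> simp

lemma euler_mul_wx (j : Fin n) :
    weylEuler K n * Wx K j = Wx K j * weylEuler K n + Wx K j := by
  unfold weylEuler
  rw [Finset.sum_mul, Finset.mul_sum]
  have h : ∀ i : Fin n, Wx K i * Wd K i * Wx K j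
      = Wx K j * (Wx K i * Wd K i) + if i = j then Wx K i else 0 := by
    intro i
    rw [mul_assoc, wd_wx, mul_add, ← mul_assoc, wx_wx i j, mul_assoc]
    congr 1
    split_ifs <;> simp
  simp only [h, Finset.sum_add_distrib, Finset.sum_ite_eq', Finset.mem_univ, if_true]

lemma euler_mul_wd (j : Fin n) :
    weylEuler K n * Wd K j = Wd K j * weylEuler K n - Wd K j := by
  unfold weylEuler
  rw [Finset.sum_mul, Finset.mul_sum]
  have h1 : ∀ i : Fin n, Wx K i * Wd K i * Wd K j = Wx K i * Wd K j * Wd K i := by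
    intro i; rw [mul_assoc, wd_wd i j, mul_assoc]
  have h2 : ∀ i : Fin n, Wd K j * (Wx K i * Wd K i)
      = Wx K i * Wd K j * Wd K i + if j = i then Wd K i else 0 := by
    intro i
    rw [← mul_assoc, wd_wx j i, add_mul]
    congr 1
    split_ifs <;> simp
  simp only [h1, h2, Finset.sum_add_distrib, Finset.sum_ite_eq, Finset.mem_univ, if_true]
  abel

/-- `g` is a "good operator of degree `t`": it satisfies the Euler commutation relation
and raises internal degrees by `t` on every graded module. -/
def GoodOp (K : Type) [Field K] (n : ℕ) (g : WeylAlgebra K n) (t : ℤ) : Prop :=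
  (weylEuler K n * g = g * weylEuler K n + (t : WeylAlgebra K n) * g) ∧
  (∀ (M : GWM K n) (j : ℤ) (z : M.carrier), z ∈ M.deg j → g • z ∈ M.deg (j + t))

lemma goodOp_zero (t : ℤ) : GoodOp K n 0 t := by
  constructor
  · simp
  · intro M j z _
    simpa using (M.deg (j + t)).zero_mem

lemma goodOp_add {a b : WeylAlgebra K n} {t : ℤ} (ha : GoodOp K n a t) (hb : GoodOp K n b t) :
    GoodOp K n (a + b) t := by
  constructor
  · rw [mul_add, ha.1, hb.1, add_mul, mul_add]; abel
  · intro M j z hz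
    rw [add_smul]
    exact (M.deg (j + t)).add_mem (ha.2 M j z hz) (hb.2 M j z hz)

lemma goodOp_ksmul {a : WeylAlgebra K n} {t : ℤ} (c : K) (ha : GoodOp K n a t) :
    GoodOp K n (c • a) t := by
  constructor
  · rw [Algebra.smul_def, ← mul_assoc, ← Algebra.commutes c (weylEuler K n), mul_assoc, ha.1]
    rw [mul_add, ← mul_assoc, ← mul_assoc, Algebra.commutes c, Algebra.commutes c]
    rw [mul_assoc ((t : WeylAlgebra K n)) _ a, Algebra.commutes c a]
  · intro M j z hz
    rw [Algebra.smul_def, mul_smul]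
    exact M.k_smul c _ _ (ha.2 M j z hz)

lemma goodOp_sum {ι : Type*} (s : Finset ι) (g : ι → WeylAlgebra K n) {t : ℤ}
    (h : ∀ i ∈ s, GoodOp K n (g i) t) : GoodOp K n (∑ i ∈ s, g i) t := by
  classical
  induction s using Finset.induction_on with
  | empty => simpa using goodOp_zero t
  | insert _ _ hx ih =>
      rw [Finset.sum_insert hx]
      exact goodOp_add (h _ (Finset.mem_insert_self _ _))
        (ih fun i hi => h i (Finset.mem_insert_of_mem hi))

lemma goodOp_one : GoodOp K n 1 0 := by
  constructor
  · simp
  · intro M j z hz; simpa using hz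

lemma goodOp_mul {a b : WeylAlgebra K n} {p q : ℤ} (ha : GoodOp K n a p) (hb : GoodOp K n b q) :
    GoodOp K n (a * b) (p + q) := by
  constructor
  · have hq : a * (q : WeylAlgebra K n) = (q : WeylAlgebra K n) * a := (Int.cast_comm q a).symm
    rw [← mul_assoc, ha.1, add_mul, mul_assoc, hb.1, mul_add, ← mul_assoc, ← mul_assoc, hq]
    push_cast
    rw [add_mul, mul_assoc ((p : WeylAlgebra K n)), mul_assoc ((q : WeylAlgebra K n))]
    abel
  · intro M j z hz
    have h2 := ha.2 M (j + q) (b • z) (hb.2 M j z hz)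
    have e : j + q + p = j + (p + q) := by ring
    rw [e] at h2
    rwa [mul_smul]

lemma goodOp_wx (i : Fin n) : GoodOp K n (Wx K i) 1 := by
  refine ⟨by rw [euler_mul_wx]; push_cast; rw [one_mul], ?_⟩
  intro M j z hz
  exact M.x_smul i j z hz

lemma goodOp_wd (i : Fin n) : GoodOp K n (Wd K i) (-1) := by
  have e2 : ((-1 : ℤ) : WeylAlgebra K n) * Wd K i = -Wd K i := by
    simp only [Int.cast_neg, Int.cast_one]
    exact neg_one_mul (Wd K i)
  refine ⟨by rw [euler_mul_wd, e2, sub_eq_add_neg], ?_⟩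
  intro M j z hz
  have := M.d_smul i j z hz
  rwa [show j - 1 = j + (-1) by ring] at this

lemma goodOp_algebraMap (c : K) : GoodOp K n (algebraMap K (WeylAlgebra K n) c) 0 := by
  have := goodOp_ksmul (n := n) c goodOp_one
  rwa [Algebra.smul_def, mul_one] at this

lemma goodOp_pow {g : WeylAlgebra K n} {t : ℤ} (h : GoodOp K n g t) (k : ℕ) :
    GoodOp K n (g ^ k) ((k : ℤ) * t) := by
  induction k with
  | zero => simpa using goodOp_one
  | succ k ih =>
      have hgood := goodOp_mul ih h
      have e : (((k + 1 : ℕ)) : ℤ) * t = (k : ℤ) * t + t := by push_cast; ring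
      rw [pow_succ, e]
      exact hgood

lemma goodOp_of_isHomogPoly {g : WeylAlgebra K n} {d : ℕ} (h : IsHomogPoly K g d) :
    GoodOp K n g (d : ℤ) := by
  have hmon : ∀ l : List (Fin n), GoodOp K n ((l.map (Wx K)).prod) (l.length : ℤ) := by
    intro l
    induction l with
    | nil => simpa using goodOp_one
    | cons i l ih =>
        have := goodOp_mul (goodOp_wx i) ih
        simpa [add_comm] using this
  refine Submodule.span_induction ?_ (goodOp_zero _) (fun x y _ _ hx hy => goodOp_add hx hy)
    (fun c x _ hx => goodOp_ksmul c hx) h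
  rintro w ⟨l, hl, rfl⟩
  rw [← hl]
  exact hmon l

open Pointwise in
/-- Every element of the Weyl algebra decomposes into weight-homogeneous components. -/
lemma exists_goodOp_decomp (w : WeylAlgebra K n) :
    ∃ (F : Finset ℤ) (c : ℤ → WeylAlgebra K n),
      (∀ t ∈ F, GoodOp K n (c t) t) ∧ w = ∑ t ∈ F, c t := by
  classical
  obtain ⟨x, rfl⟩ := RingQuot.mkAlgHom_surjective K (WeylRel K n) w
  induction x using FreeAlgebra.induction with
  | grade0 r =>
      refine ⟨{0}, fun _ => algebraMap K (WeylAlgebra K n) r, ?_, ?_⟩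
      · intro t ht
        rw [Finset.mem_singleton] at ht
        subst ht
        exact goodOp_algebraMap r
      · rw [Finset.sum_singleton, AlgHom.commutes]
  | grade1 y =>
      cases y with
      | inl i =>
          refine ⟨{1}, fun _ => Wx K i, ?_, by rw [Finset.sum_singleton]; rfl⟩
          intro t ht
          rw [Finset.mem_singleton] at ht
          subst ht
          exact goodOp_wx i
      | inr i =>
          refine ⟨{-1}, fun _ => Wd K i, ?_, by rw [Finset.sum_singleton]; rfl⟩
          intro t ht
          rw [Finset.mem_singleton] at ht
          subst ht
          exact goodOp_wd i
  | add a b ha hb =>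
      obtain ⟨F1, c1, h1, e1⟩ := ha
      obtain ⟨F2, c2, h2, e2⟩ := hb
      refine ⟨F1 ∪ F2, fun t => (if t ∈ F1 then c1 t else 0) + (if t ∈ F2 then c2 t else 0),
        ?_, ?_⟩
      · intro t _
        refine goodOp_add ?_ ?_ <;> split_ifs with h
        · exact h1 t h
        · exact goodOp_zero t
        · exact h2 t h
        · exact goodOp_zero t
      · rw [map_add, e1, e2, Finset.sum_add_distrib,
          Finset.sum_ite_mem, Finset.sum_ite_mem,
          Finset.union_inter_cancel_left, Finset.union_inter_cancel_right]
  | mul a b ha hb =>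
      obtain ⟨F1, c1, h1, e1⟩ := ha
      obtain ⟨F2, c2, h2, e2⟩ := hb
      refine ⟨F1 + F2,
        fun u => ∑ p ∈ (F1 ×ˢ F2).filter (fun p => p.1 + p.2 = u), c1 p.1 * c2 p.2, ?_, ?_⟩
      · intro u _
        refine goodOp_sum _ _ ?_
        intro p hp
        rw [Finset.mem_filter, Finset.mem_product] at hp
        have := goodOp_mul (h1 p.1 hp.1.1) (h2 p.2 hp.1.2)
        rwa [hp.2] at this
      · rw [map_mul, e1, e2, Finset.sum_mul_sum]
        rw [← Finset.sum_product']
        refine (Finset.sum_fiberwise_of_maps_to ?_ _).symm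
        intro p hp
        rw [Finset.mem_product] at hp
        exact Finset.add_mem_add hp.1 hp.2

/-- Commutation of powers of shifted Euler operators past a good operator. -/
lemma euler_pow_mul {g : WeylAlgebra K n} {c : ℤ}
    (h : weylEuler K n * g = g * weylEuler K n + (c : WeylAlgebra K n) * g)
    (j : ℤ) (a : ℕ) :
    (weylEuler K n - ((j + c : ℤ) : WeylAlgebra K n)) ^ a * g
      = g * (weylEuler K n - (j : WeylAlgebra K n)) ^ a := by
  have base : (weylEuler K n - ((j + c : ℤ) : WeylAlgebra K n)) * g
      = g * (weylEuler K n - (j : WeylAlgebra K n)) := by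
    rw [sub_mul, mul_sub, h]
    push_cast
    have : ((j : WeylAlgebra K n) + (c : WeylAlgebra K n)) * g
        = g * (j : WeylAlgebra K n) + (c : WeylAlgebra K n) * g := by
      rw [add_mul, Int.cast_comm]
    rw [this]
    abel
  induction a with
  | zero => simp
  | succ a ih =>
      rw [pow_succ, pow_succ', mul_assoc, base, ← mul_assoc, ih, mul_assoc, ← pow_succ',
        ← pow_succ]

/-- Homogeneous decomposition of an element of a graded module. -/
lemma exists_homog_decomp (M : GWM K n) (m : M.carrier) :
    ∃ (F : Finset ℤ) (v : ℤ → M.carrier),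
      (∀ t ∈ F, v t ∈ M.deg t) ∧ m = ∑ t ∈ F, v t := by
  classical
  obtain ⟨d, hd⟩ := M.isInternal.surjective m
  refine ⟨DFinsupp.support d, fun t => (d t : M.carrier), fun t _ => (d t).2, ?_⟩
  rw [← hd]
  conv_lhs => rw [← DirectSum.sum_support_of d]
  rw [map_sum]
  exact Finset.sum_congr rfl fun t _ => DirectSum.coeAddMonoidHom_of _ _ _

/-- Uniqueness of homogeneous components: if a sum of homogeneous elements is itself
homogeneous of degree `j`, it equals its `j`-th term. -/
lemma sum_homog_eq (M : GWM K n) (F : Finset ℤ) (v : ℤ → M.carrier)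
    (hv : ∀ t ∈ F, v t ∈ M.deg t) (j : ℤ) (hj : (∑ t ∈ F, v t) ∈ M.deg j) :
    (∑ t ∈ F, v t) = if j ∈ F then v j else 0 := by
  classical
  set d : DirectSum ℤ (fun t => M.deg t) :=
    ∑ t ∈ F.attach, DirectSum.of (fun t : ℤ => M.deg t) t.1 ⟨v t.1, hv t.1 t.2⟩ with hd
  have hcoe : DirectSum.coeAddMonoidHom M.deg d = ∑ t ∈ F, v t := by
    rw [hd, map_sum, ← Finset.sum_attach F v]
    exact Finset.sum_congr rfl fun t _ => DirectSum.coeAddMonoidHom_of _ _ _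
  set d' : DirectSum ℤ (fun t => M.deg t) :=
    DirectSum.of (fun t : ℤ => M.deg t) j ⟨∑ t ∈ F, v t, hj⟩ with hd'
  have hdd : d = d' := by
    apply M.isInternal.injective
    rw [hcoe, hd', DirectSum.coeAddMonoidHom_of]
  have hev : (d j : M.carrier) = (d' j : M.carrier) := by rw [hdd]
  have hd'j : (d' j : M.carrier) = ∑ t ∈ F, v t := by
    rw [hd', DirectSum.of_eq_same]
  have hdj : (d j : M.carrier) = if j ∈ F then v j else 0 := by
    rw [hd, DFinsupp.finset_sum_apply]
    by_cases hjF : j ∈ F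
    · push_cast
      rw [Finset.sum_eq_single_of_mem (⟨j, hjF⟩ : {x // x ∈ F}) (Finset.mem_attach _ _)]
      · rw [DirectSum.of_eq_same, if_pos hjF]
      · intro b _ hb
        have : b.1 ≠ j := fun hbj => hb (Subtype.ext hbj)
        rw [DirectSum.of_eq_of_ne _ _ _ this.symm]
        rfl
    · rw [if_neg hjF]
      push_cast
      refine Finset.sum_eq_zero fun b _ => ?_
      have : b.1 ≠ j := fun hbj => hjF (hbj ▸ b.2)
      rw [DirectSum.of_eq_of_ne _ _ _ this.symm]
      rfl
  rw [← hd'j, ← hev, hdj]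

lemma euler_smul_e {R0 : GWM K n} {e : R0.carrier} (hde : ∀ i : Fin n, Wd K i • e = 0) :
    weylEuler K n • e = 0 := by
  unfold weylEuler
  rw [Finset.sum_smul]
  refine Finset.sum_eq_zero fun i _ => ?_
  rw [mul_smul, hde i, smul_zero]

lemma poly_isGenEulerian (R0 : GWM K n) (h : IsPolynomialGWM K R0) : R0.IsGenEulerian := by
  obtain ⟨e, he0, hde, hspan, -⟩ := h
  intro j m hm
  refine ⟨1, le_refl 1, ?_⟩
  have hm' : m ∈ Submodule.span (WeylAlgebra K n) {e} := by
    rw [hspan]; exact Submodule.mem_top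
  obtain ⟨w, hw⟩ := Submodule.mem_span_singleton.mp hm'
  obtain ⟨F, c, hc, rfl⟩ := exists_goodOp_decomp w
  rw [Finset.sum_smul] at hw
  have hmem : ∀ t ∈ F, c t • e ∈ R0.deg t := by
    intro t ht
    have := (hc t ht).2 R0 0 e he0
    rwa [zero_add] at this
  have heq := sum_homog_eq R0 F (fun t => c t • e) hmem j (hw ▸ hm)
  rw [hw] at heq
  rw [pow_one, heq]
  by_cases hjF : j ∈ F
  · rw [if_pos hjF]
    have hcomm := (hc j hjF).1
    have : (weylEuler K n - (j : WeylAlgebra K n)) * c j = c j * weylEuler K n := by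
      rw [sub_mul, hcomm]; abel
    show (weylEuler K n - (j : WeylAlgebra K n)) • (c j • e) = 0
    rw [← mul_smul, this, mul_smul, euler_smul_e hde, smul_zero]
  · rw [if_neg hjF, smul_zero]

section Loc
variable {M : GWM K n} {s : ℕ} {f : Fin s → WeylAlgebra K n}

lemma goodOp_cechProd (df : Fin s → ℕ) (hf : ∀ k, IsHomogPoly K (f k) (df k))
    (S : Finset (Fin s)) : ∃ Dg : ℤ, GoodOp K n (cechProd f S) Dg := by
  unfold cechProd
  generalize (S.sort (· ≤ ·)) = l
  induction l with
  | nil => exact ⟨0, by simpa using goodOp_one⟩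
  | cons k l ih =>
      obtain ⟨Dl, hDl⟩ := ih
      refine ⟨(df k : ℤ) + Dl, ?_⟩
      have := goodOp_mul (goodOp_of_isHomogPoly (hf k)) hDl
      simpa using this

lemma smul_pow_injective (D : CechData K n M s f) (S : Finset (Fin s)) (k : ℕ) :
    Function.Injective (fun z : (D.L S).carrier => (cechProd f S) ^ k • z) := by
  induction k with
  | zero => intro a b h; simpa using h
  | succ k ih =>
      intro a b h
      simp only [pow_succ, mul_smul] at h
      have h2 := ih h
      exact (D.loc_bij S).injective h2

lemma cechL_isGenEulerian (df : Fin s → ℕ) (hf : ∀ k, IsHomogPoly K (f k) (df k))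
    (D : CechData K n M s f) (hM : M.IsGenEulerian) (S : Finset (Fin s)) :
    (D.L S).IsGenEulerian := by
  classical
  intro j z hz
  obtain ⟨Dg, hg⟩ := goodOp_cechProd df hf S
  obtain ⟨m, k, hk⟩ := D.loc_surj S z
  set g := cechProd f S with hgdef
  set J : ℤ := j + (k : ℤ) * Dg with hJ
  have hgk := goodOp_pow hg k
  have hdegz : (g ^ k) • z ∈ (D.L S).deg J := hgk.2 _ j z hz
  set φ : M.carrier →+ (D.L S).carrier :=
    AddMonoidHom.mk' (fun m => D.ρ (Finset.empty_subset S) (D.η m))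
      (fun a b => by beta_reduce; rw [D.η_add, D.ρ_add]) with hφ
  have φsmul : ∀ (w : WeylAlgebra K n) (m : M.carrier), φ (w • m) = w • φ m := by
    intro w m
    show D.ρ _ (D.η (w • m)) = w • D.ρ _ (D.η m)
    rw [D.η_smul, D.ρ_smul]
  obtain ⟨F, v, hv, hdec⟩ := exists_homog_decomp M m
  have hsum : (∑ t ∈ F, φ (v t)) = (g ^ k) • z := by
    rw [← map_sum, ← hdec, hk]
    rfl
  have hmem : ∀ t ∈ F, φ (v t) ∈ (D.L S).deg t := fun t ht =>
    D.ρ_deg _ t _ (D.η_deg t _ (hv t ht))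
  have huniq := sum_homog_eq (D.L S) F (fun t => φ (v t)) hmem J (hsum ▸ hdegz)
  set m' : M.carrier := if J ∈ F then v J else 0 with hm'def
  have hm' : m' ∈ M.deg J := by
    rw [hm'def]
    split
    · exact hv _ ‹_›
    · exact zero_mem _
  have hφm' : φ m' = (g ^ k) • z := by
    rw [← hsum, huniq, hm'def]
    split
    · rfl
    · rw [map_zero]
  obtain ⟨a, ha1, hkill⟩ := hM J m' hm'
  refine ⟨a, ha1, ?_⟩
  have h1 : (weylEuler K n - (J : WeylAlgebra K n)) ^ a • ((g ^ k) • z) = 0 := by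
    rw [← hφm', ← φsmul, hkill, map_zero]
  have hcomm := euler_pow_mul (c := (k : ℤ) * Dg) hgk.1 j a
  have h2 : (g ^ k) • ((weylEuler K n - (j : WeylAlgebra K n)) ^ a • z) = 0 := by
    rw [← mul_smul, ← hcomm, mul_smul]
    exact h1
  have := smul_pow_injective D S k (a₁ := (weylEuler K n - (j : WeylAlgebra K n)) ^ a • z)
    (a₂ := 0) (by simpa using h2)
  exact this

end Loc

lemma exists_uniform_kill {ι : Type} [Fintype ι] (L : ι → GWM K n)
    (hL : ∀ i, (L i).IsGenEulerian) (j : ℤ) (x : ∀ i, (L i).carrier)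
    (hx : ∀ i, x i ∈ (L i).deg j) :
    ∃ a : ℕ, 1 ≤ a ∧ ∀ i, ((weylEuler K n - (j : WeylAlgebra K n)) ^ a) • x i = 0 := by
  classical
  have h : ∀ i, ∃ a, 1 ≤ a ∧ ((weylEuler K n - (j : WeylAlgebra K n)) ^ a) • x i = 0 :=
    fun i => hL i j (x i) (hx i)
  choose a ha hkill using h
  refine ⟨1 + Finset.univ.sup a, Nat.le_add_right 1 _, ?_⟩
  intro i
  have hle : a i ≤ 1 + Finset.univ.sup a :=
    le_trans (Finset.le_sup (Finset.mem_univ i)) (Nat.le_add_left _ _)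
  obtain ⟨b, hb⟩ := Nat.exists_eq_add_of_le hle
  rw [hb, add_comm (a i) b, pow_add, mul_smul, hkill i, smul_zero]

lemma pi_gen_eulerian {ι : Type} [Fintype ι] {L : ι → GWM K n}
    (hL : ∀ i, (L i).IsGenEulerian) {W : GWM K n}
    (π : (∀ i, (L i).carrier) → W.carrier)
    (hadd : ∀ x y, π (x + y) = π x + π y)
    (hsmul : ∀ (u : WeylAlgebra K n) x, π (u • x) = u • π x)
    (hsurj : ∀ (j : ℤ) (w : W.carrier), w ∈ W.deg j →
      ∃ x, (∀ i, x i ∈ (L i).deg j) ∧ π x = w) :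
    W.IsGenEulerian := by
  have h0 : π 0 = 0 := by
    have h00 := hadd 0 0
    rw [add_zero] at h00
    exact (left_eq_add.mp h00)
  intro j w hw
  obtain ⟨x, hx, hπ⟩ := hsurj j w hw
  obtain ⟨a, ha1, hkill⟩ := exists_uniform_kill L hL j x hx
  refine ⟨a, ha1, ?_⟩
  have hx0 : (weylEuler K n - (j : WeylAlgebra K n)) ^ a • x = 0 := funext fun i => hkill i
  rw [← hπ, ← hsmul, hx0, h0]

lemma prod_gen_eulerian {ι₁ ι₂ : Type} [Fintype ι₁] [Fintype ι₂]
    {L₁ : ι₁ → GWM K n} {L₂ : ι₂ → GWM K n}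
    (hL₁ : ∀ i, (L₁ i).IsGenEulerian) (hL₂ : ∀ i, (L₂ i).IsGenEulerian) {W : GWM K n}
    (π : ((∀ i, (L₁ i).carrier) × (∀ i, (L₂ i).carrier)) → W.carrier)
    (hadd : ∀ x y, π (x + y) = π x + π y)
    (hsmul : ∀ (u : WeylAlgebra K n) x, π (u • x) = u • π x)
    (hsurj : ∀ (j : ℤ) (w : W.carrier), w ∈ W.deg j →
      ∃ z, (∀ i, z.1 i ∈ (L₁ i).deg j) ∧ (∀ i, z.2 i ∈ (L₂ i).deg j) ∧ π z = w) :
    W.IsGenEulerian := by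
  have h0 : π 0 = 0 := by
    have h00 := hadd 0 0
    rw [add_zero] at h00
    exact (left_eq_add.mp h00)
  intro j w hw
  obtain ⟨z, hz1, hz2, hπ⟩ := hsurj j w hw
  obtain ⟨a, ha1, hkill⟩ := exists_uniform_kill (ι := ι₁ ⊕ ι₂) (Sum.elim L₁ L₂)
    (fun i => Sum.casesOn i (fun i => hL₁ i) (fun i => hL₂ i)) j
    (fun i => Sum.casesOn i (fun i => z.1 i) (fun i => z.2 i))
    (fun i => Sum.casesOn i (fun i => hz1 i) (fun i => hz2 i))
  refine ⟨a, ha1, ?_⟩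
  have hz0 : (weylEuler K n - (j : WeylAlgebra K n)) ^ a • z = 0 := by
    refine Prod.ext ?_ ?_
    · exact funext fun i => hkill (Sum.inl i)
    · exact funext fun i => hkill (Sum.inr i)
  rw [← hπ, ← hsmul, hz0, h0]

lemma step_preserves {V W : GWM K n} (h : LyubeznikStep K n V W) (hV : V.IsGenEulerian) :
    W.IsGenEulerian := by
  classical
  cases h with
  | cone s sL f df hf D i h =>
      obtain ⟨π, hadd, hsmul, -, -, hsurj⟩ := h
      exact prod_gen_eulerian
        (fun S : {S : Finset (Fin s) // (S.card : ℤ) = i + 1} =>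
          cechL_isGenEulerian df hf D hV S.1)
        (fun S : {S : Finset (Fin s) // (S.card : ℤ) = i ∧ ∀ x ∈ S, (x : ℕ) < sL} =>
          cechL_isGenEulerian df hf D hV S.1) π hadd hsmul
        (fun j w hw => by
          obtain ⟨z, -, hhom, hπ⟩ := hsurj j w hw
          exact ⟨z, hhom.1, hhom.2, hπ⟩)
  | ker1 s sL f df hf D i h =>
      obtain ⟨π, hadd, hsmul, -, -, hsurj⟩ := h
      exact pi_gen_eulerian
        (fun S : {S : Finset (Fin s) // (S.card : ℤ) = i} =>
          cechL_isGenEulerian df hf D hV S.1) π hadd hsmul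
        (fun j w hw => by
          obtain ⟨x, -, -, hhom, hπ⟩ := hsurj j w hw
          exact ⟨x, hhom, hπ⟩)
  | ker2 s sL f df hf D i h =>
      obtain ⟨π, hadd, hsmul, -, -, hsurj⟩ := h
      exact pi_gen_eulerian
        (fun S : {S : Finset (Fin s) // (S.card : ℤ) = i ∧ ∀ x ∈ S, (x : ℕ) < sL} =>
          cechL_isGenEulerian df hf D hV S.1) π hadd hsmul
        (fun j w hw => by
          obtain ⟨x, -, -, hhom, hπ⟩ := hsurj j w hw
          exact ⟨x, hhom, hπ⟩)
  | ker3 s sL f df hf D i h =>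
      obtain ⟨π, hadd, hsmul, -, -, hsurj⟩ := h
      exact prod_gen_eulerian
        (fun S : {S : Finset (Fin s) // (S.card : ℤ) = i + 1} =>
          cechL_isGenEulerian df hf D hV S.1)
        (fun S : {S : Finset (Fin s) // (S.card : ℤ) = i ∧ ∀ x ∈ S, (x : ℕ) < sL} =>
          cechL_isGenEulerian df hf D hV S.1) π hadd hsmul
        (fun j w hw => by
          obtain ⟨z, -, -, hhom, hπ⟩ := hsurj j w hw
          exact ⟨z, hhom.1, hhom.2, hπ⟩)

end Aux


/-- Theorem `third`.  Let `𝒯` be a graded Lyubeznik functor on the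
category of graded `R`-modules.  Then `𝒯(R)` is a generalized Eulerian `A_n(K)`-module.
Here `R₀` is `R = K[X_1, …, X_n]` as a graded `A_n(K)`-module, and `W = 𝒯(R₀)` ranges over
all values of graded Lyubeznik functors at `R₀`. -/
theorem lyubeznik_functor_value_is_generalizedEulerian
    (K : Type) [Field K] [CharZero K] (n : ℕ)
    (R0 : GWM K n) (hR0 : IsPolynomialGWM K R0)
    (W : GWM K n) (hW : IsLyubeznikValue K n R0 W) :
    W.IsGenEulerian := by
  induction hW with
  | refl => exact poly_isGenEulerian R0 hR0
  | tail _ hstep ih => exact step_preserves hstep ih
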